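/- Let M ⊆ ℝⁿ be nonempty closed convex, and {yₖ} a sequence Fejér monotone with respect to M such that dist(yₖ, M) → 0 R-linearly. Then {yₖ} converges R-linearly to some y* ∈ M, with asymptotic constant at most that of {dist(yₖ, M)}. -/

import Mathlib

open Filter Topology

theorem stmt_12 {n : ℕ} (M : Set (EuclideanSpace ℝ (Fin n)))
    (hMne : M.Nonempty) (hMcl : IsClosed M) (hMcv : Convex ℝ M)
    (y : ℕ → EuclideanSpace ℝ (Fin n))
    (hfejer : ∀ k, ∀ z ∈ M, dist (y (k + 1)) z ≤ dist (y k) z)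
    (hRlin : limsup (fun k => Metric.infDist (y k) M ^ ((k : ℝ)⁻¹)) atTop < 1) :
    ∃ ystar ∈ M, Tendsto y atTop (𝓝 ystar) ∧
      limsup (fun k => ‖y k - ystar‖ ^ ((k : ℝ)⁻¹)) atTop ≤
        limsup (fun k => Metric.infDist (y k) M ^ ((k : ℝ)⁻¹)) atTop := by
  classical
  have hdnn : ∀ k, 0 ≤ Metric.infDist (y k) M := fun k => Metric.infDist_nonneg
  choose z hzM hzd using fun k => hMcl.exists_infDist_eq_dist hMne (y k)
  have hdmono : ∀ k, Metric.infDist (y (k + 1)) M ≤ Metric.infDist (y k) M := fun k =>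
    (Metric.infDist_le_dist_of_mem (hzM k)).trans ((hfejer k _ (hzM k)).trans_eq (hzd k).symm)
  have hstep : ∀ k, dist (y k) (y (k + 1)) ≤ 2 * Metric.infDist (y k) M := by
    intro k
    calc dist (y k) (y (k + 1)) ≤ dist (y k) (z k) + dist (y (k + 1)) (z k) := by
          rw [dist_comm (y (k+1))]; exact dist_triangle _ _ _
      _ ≤ dist (y k) (z k) + dist (y k) (z k) := by
          have := hfejer k _ (hzM k); linarith
      _ = 2 * Metric.infDist (y k) M := by rw [hzd k]; ring
  have hd0 : ∀ k, Metric.infDist (y k) M ≤ Metric.infDist (y 0) M := by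
    intro k
    induction k with
    | zero => exact le_refl _
    | succ k ih => exact (hdmono k).trans ih
  have hFnn : ∀ k : ℕ, 0 ≤ Metric.infDist (y k) M ^ ((k : ℝ)⁻¹) :=
    fun k => Real.rpow_nonneg (hdnn k) _
  have hFbdd : ∀ k : ℕ, Metric.infDist (y k) M ^ ((k : ℝ)⁻¹) ≤ max (Metric.infDist (y 0) M) 1 := by
    intro k
    rcases Nat.eq_zero_or_pos k with rfl | hk
    · simp
    · have hk1 : (1 : ℝ) ≤ (k : ℝ) := by exact_mod_cast hk
      calc Metric.infDist (y k) M ^ ((k : ℝ)⁻¹)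
          ≤ (max (Metric.infDist (y 0) M) 1) ^ ((k : ℝ)⁻¹) :=
            Real.rpow_le_rpow (hdnn k) ((hd0 k).trans (le_max_left _ _)) (by positivity)
        _ ≤ (max (Metric.infDist (y 0) M) 1) ^ (1 : ℝ) :=
            Real.rpow_le_rpow_of_exponent_le (le_max_right _ _)
              (by rw [inv_le_one_iff₀]; right; exact hk1)
        _ = max (Metric.infDist (y 0) M) 1 := Real.rpow_one _
  have hbdd : IsBoundedUnder (· ≤ ·) atTop
      (fun k : ℕ => Metric.infDist (y k) M ^ ((k : ℝ)⁻¹)) :=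
    isBoundedUnder_of ⟨max (Metric.infDist (y 0) M) 1, hFbdd⟩
  set r := limsup (fun k : ℕ => Metric.infDist (y k) M ^ ((k : ℝ)⁻¹)) atTop with hr
  have hr0 : 0 ≤ r :=
    le_limsup_of_frequently_le (Eventually.frequently (Eventually.of_forall hFnn)) hbdd
  have hr1 : r < 1 := hRlin
  -- key construction for any ρ ∈ (r, 1)
  have key : ∀ ρ : ℝ, r < ρ → ρ < 1 →
      (∃ C, 0 < C ∧ ∀ k, dist (y k) (y (k + 1)) ≤ C * ρ ^ k) ∧
      (∀ᶠ k in atTop, Metric.infDist (y k) M ≤ ρ ^ k) := by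
    intro ρ hrρ hρ1
    have hρ0 : 0 < ρ := hr0.trans_lt hrρ
    obtain ⟨N, hN⟩ := eventually_atTop.1 (eventually_lt_of_limsup_lt hrρ hbdd)
    have hdk : ∀ k, N + 1 ≤ k → Metric.infDist (y k) M ≤ ρ ^ k := by
      intro k hk
      have hk0 : k ≠ 0 := by omega
      calc Metric.infDist (y k) M
          = (Metric.infDist (y k) M ^ ((k : ℝ)⁻¹)) ^ k :=
            (Real.rpow_inv_natCast_pow (hdnn k) hk0).symm
        _ ≤ ρ ^ k := pow_le_pow_left₀ (hFnn k) (hN k (by omega)).le k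
    have hpowpos : (0 : ℝ) < ρ ^ (N + 1) := pow_pos hρ0 _
    have hCpos : 0 < 2 * (Metric.infDist (y 0) M + 1) / ρ ^ (N + 1) := by
      have := hdnn 0
      apply div_pos (by linarith) hpowpos
    refine ⟨⟨2 * (Metric.infDist (y 0) M + 1) / ρ ^ (N + 1), hCpos, ?_⟩,
      eventually_atTop.2 ⟨N + 1, hdk⟩⟩
    have hC2 : (2 : ℝ) ≤ 2 * (Metric.infDist (y 0) M + 1) / ρ ^ (N + 1) := by
      rw [le_div_iff₀ hpowpos]
      have h1 : ρ ^ (N + 1) ≤ 1 := pow_le_one₀ hρ0.le hρ1.le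
      nlinarith [hdnn 0]
    intro k
    rcases le_or_gt (N + 1) k with hk | hk
    · calc dist (y k) (y (k + 1)) ≤ 2 * Metric.infDist (y k) M := hstep k
        _ ≤ 2 * ρ ^ k := by linarith [hdk k hk]
        _ ≤ 2 * (Metric.infDist (y 0) M + 1) / ρ ^ (N + 1) * ρ ^ k :=
            mul_le_mul_of_nonneg_right hC2 (pow_nonneg hρ0.le k)
    · calc dist (y k) (y (k + 1)) ≤ 2 * Metric.infDist (y k) M := hstep k
        _ ≤ 2 * (Metric.infDist (y 0) M + 1) := by linarith [hd0 k]
        _ = 2 * (Metric.infDist (y 0) M + 1) / ρ ^ (N + 1) * ρ ^ (N + 1) :=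
            (div_mul_cancel₀ _ hpowpos.ne').symm
        _ ≤ 2 * (Metric.infDist (y 0) M + 1) / ρ ^ (N + 1) * ρ ^ k :=
            mul_le_mul_of_nonneg_left
              (pow_le_pow_of_le_one hρ0.le hρ1.le (by omega)) hCpos.le
  -- convergence using ρ₀
  set ρ₀ := (max r 0 + 1) / 2 with hρ₀def
  have hrρ₀ : r < ρ₀ := by
    have h1 : max r 0 < 1 := max_lt hr1 one_pos
    have h2 : r ≤ max r 0 := le_max_left _ _
    simp only [hρ₀def]; linarith
  have hρ₀1 : ρ₀ < 1 := by
    have h1 : max r 0 < 1 := max_lt hr1 one_pos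
    simp only [hρ₀def]; linarith
  have hρ₀0 : 0 < ρ₀ := hr0.trans_lt hrρ₀
  obtain ⟨⟨C₀, hC₀0, hC₀⟩, hdev⟩ := key ρ₀ hrρ₀ hρ₀1
  have hcauchy : CauchySeq y := cauchySeq_of_le_geometric ρ₀ C₀ hρ₀1 hC₀
  obtain ⟨ystar, htend⟩ := cauchySeq_tendsto_of_complete hcauchy
  have hdtend : Tendsto (fun k => Metric.infDist (y k) M) atTop (𝓝 0) := by
    refine squeeze_zero' (Eventually.of_forall hdnn) hdev ?_
    exact tendsto_pow_atTop_nhds_zero_of_lt_one hρ₀0.le hρ₀1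
  have hmem : ystar ∈ M := by
    rw [hMcl.mem_iff_infDist_zero hMne]
    exact tendsto_nhds_unique (((Metric.continuous_infDist_pt M).tendsto ystar).comp htend) hdtend
  refine ⟨ystar, hmem, htend, ?_⟩
  have main : ∀ ρ : ℝ, r < ρ → ρ < 1 →
      limsup (fun k : ℕ => ‖y k - ystar‖ ^ ((k : ℝ)⁻¹)) atTop ≤ ρ := by
    intro ρ hrρ hρ1
    have hρ0 : 0 < ρ := hr0.trans_lt hrρ
    obtain ⟨⟨C, hC0, hC⟩, -⟩ := key ρ hrρ hρ1
    set D := C / (1 - ρ) + 1 with hD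
    have hD1 : 1 ≤ D := by
      have : 0 ≤ C / (1 - ρ) := div_nonneg hC0.le (by linarith)
      simp only [hD]; linarith
    have hD0 : 0 < D := lt_of_lt_of_le one_pos hD1
    have hdist : ∀ k, ‖y k - ystar‖ ≤ D * ρ ^ k := by
      intro k
      have h1 := dist_le_of_le_geometric_of_tendsto ρ C hρ1 hC htend k
      rw [dist_eq_norm] at h1
      calc ‖y k - ystar‖ ≤ C * ρ ^ k / (1 - ρ) := h1
        _ = C / (1 - ρ) * ρ ^ k := by ring
        _ ≤ D * ρ ^ k := mul_le_mul_of_nonneg_right (by simp [hD]) (pow_nonneg hρ0.le k)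
    have hle : ∀ᶠ k : ℕ in atTop,
        ‖y k - ystar‖ ^ ((k : ℝ)⁻¹) ≤ D ^ ((k : ℝ)⁻¹) * ρ := by
      filter_upwards [eventually_ge_atTop 1] with k hk
      have hk0 : k ≠ 0 := by omega
      calc ‖y k - ystar‖ ^ ((k : ℝ)⁻¹) ≤ (D * ρ ^ k) ^ ((k : ℝ)⁻¹) :=
            Real.rpow_le_rpow (norm_nonneg _) (hdist k) (by positivity)
        _ = D ^ ((k : ℝ)⁻¹) * (ρ ^ k) ^ ((k : ℝ)⁻¹) :=
            Real.mul_rpow hD0.le (pow_nonneg hρ0.le k)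
        _ = D ^ ((k : ℝ)⁻¹) * ρ := by rw [Real.pow_rpow_inv_natCast hρ0.le hk0]
    have hgtend : Tendsto (fun k : ℕ => D ^ ((k : ℝ)⁻¹) * ρ) atTop (𝓝 ρ) := by
      have h1 : Tendsto (fun k : ℕ => ((k : ℝ))⁻¹) atTop (𝓝 0) :=
        tendsto_inv_atTop_zero.comp tendsto_natCast_atTop_atTop
      have h2 : Tendsto (fun k : ℕ => D ^ ((k : ℝ)⁻¹)) atTop (𝓝 1) := by
        have h3 := (Real.continuousAt_const_rpow (a := D) (b := 0) hD0.ne').tendsto.comp h1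
        simpa [Real.rpow_zero, Function.comp_def] using h3
      simpa using h2.mul_const ρ
    calc limsup (fun k : ℕ => ‖y k - ystar‖ ^ ((k : ℝ)⁻¹)) atTop
        ≤ limsup (fun k : ℕ => D ^ ((k : ℝ)⁻¹) * ρ) atTop :=
          limsup_le_limsup hle
            (isCoboundedUnder_le_of_le atTop fun k => Real.rpow_nonneg (norm_nonneg _) _)
            hgtend.isBoundedUnder_le
      _ = ρ := hgtend.limsup_eq
  by_contra hcon
  push_neg at hcon
  set L := limsup (fun k : ℕ => ‖y k - ystar‖ ^ ((k : ℝ)⁻¹)) atTop with hL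
  have h1 : r < min L 1 := lt_min hcon hr1
  have h2 := main ((r + min L 1) / 2) (by linarith) (by have := min_le_right L 1; linarith)
  have h3 : (r + min L 1) / 2 < L := by have := min_le_left L 1; linarith
  linarith
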